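/- Let (M,q) be a metric group and let L1, L2, L3 be Lagrangian subgroups of M. Then the natural number |L1| · |L1 ∩ L2| · |L2 ∩ L3| · |L1 ∩ L3| is a perfect square. (Equivalently, writing d(Li,Lj) for the class of √|M| / |Li ∩ Lj| in the group ℚ₊ˣ/(ℚ₊ˣ)² of positive rationals modulo squares, one has d(L1,L2)·d(L2,L3) = d(L1,L3).) -/

import Mathlib

/-- The symmetric bicharacter associated to a quadratic form `q` with values in `ℂˣ`. -/
def bq {M : Type*} [AddCommGroup M] (q : M → ℂˣ) (x y : M) : ℂˣ :=
  q (x + y) * (q x)⁻¹ * (q y)⁻¹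

/-- `(M, q)` is a metric group: `q` is even, `b_q` is biadditive and nondegenerate. -/
def IsMetric {M : Type*} [AddCommGroup M] (q : M → ℂˣ) : Prop :=
  (∀ x, q (-x) = q x) ∧
  (∀ x y z, bq q (x + y) z = bq q x z * bq q y z) ∧
  (∀ x y z, bq q x (y + z) = bq q x y * bq q x z) ∧
  (∀ x, (∀ y, bq q x y = 1) → x = 0)

/-- A subgroup `L` is Lagrangian for `q` if `q = 1` on `L` and `|L|² = |M|`. -/
def IsLagrangian {M : Type*} [AddCommGroup M] (q : M → ℂˣ) (L : AddSubgroup M) : Prop :=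
  (∀ x ∈ L, q x = 1) ∧ Nat.card L ^ 2 = Nat.card M

open scoped Classical

namespace MaslovAux

universe u


variable {M : Type*} [AddCommGroup M]

lemma charSum {G : Type*} [AddCommGroup G] [Fintype G] (g : G → ℂˣ)
    (hadd : ∀ u v, g (u + v) = g u * g v) :
    (∑ u, ((g u : ℂ))) = if ∀ u, g u = 1 then (Fintype.card G : ℂ) else 0 := by
  by_cases h : ∀ u, g u = 1
  · simp [h]
  · simp only [h, if_false]
    push_neg at h
    obtain ⟨u₀, hu₀⟩ := h
    have key : (g u₀ : ℂ) * ∑ u, ((g u : ℂ)) = ∑ u, ((g u : ℂ)) := by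
      rw [Finset.mul_sum]
      refine Fintype.sum_equiv (Equiv.addLeft u₀) _ _ (fun u => ?_)
      simp [Equiv.addLeft, hadd, Units.val_mul]
    have : ((g u₀ : ℂ) - 1) * ∑ u, ((g u : ℂ)) = 0 := by ring_nf; linear_combination key
    rcases mul_eq_zero.mp this with h' | h'
    · have : (g u₀ : ℂ) = 1 := by linear_combination h'
      exact absurd (Units.ext (by simpa using this)) hu₀
    · exact h'

/-- orthogonal complement wrt a bundled pairing -/
def perp (B : M →+ (M →+ Additive ℂˣ)) (A : AddSubgroup M) : AddSubgroup M where
  carrier := {x | ∀ a ∈ A, B x a = 0}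
  zero_mem' := by intro a _; simp
  add_mem' := by
    intro x y hx hy a ha
    rw [map_add B]
    simp [AddMonoidHom.add_apply, hx a ha, hy a ha]
  neg_mem' := by
    intro x hx a ha
    rw [map_neg B]
    simp [AddMonoidHom.neg_apply, hx a ha]

lemma mem_perp {B : M →+ (M →+ Additive ℂˣ)} {A : AddSubgroup M} {x : M} :
    x ∈ perp B A ↔ ∀ a ∈ A, B x a = 0 := Iff.rfl

lemma card_perp [Fintype M] (B : M →+ (M →+ Additive ℂˣ))
    (hsym : ∀ x y, B x y = B y x) (hnd : ∀ x, (∀ y, B x y = 0) → x = 0)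
    (A : AddSubgroup M) :
    Nat.card (perp B A) * Nat.card A = Nat.card M := by
  have key : ∑ x : M, ∑ a : A, ((Additive.toMul (B x ↑a) : ℂˣ) : ℂ)
      = (Fintype.card A : ℂ) * (Fintype.card (perp B A) : ℂ) := by
    have step : ∀ x : M, (∑ a : A, ((Additive.toMul (B x ↑a) : ℂˣ) : ℂ))
        = if x ∈ perp B A then (Fintype.card A : ℂ) else 0 := by
      intro x
      rw [charSum (fun a : A => Additive.toMul (B x ↑a))
        (fun u v => by push_cast [map_add]; rfl)]
      congr 1
      · rw [eq_iff_iff]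
        constructor
        · intro h a ha
          have := h ⟨a, ha⟩
          simpa using this
        · intro h a; simpa using h a a.2
    rw [Finset.sum_congr rfl (fun x _ => step x)]
    rw [Finset.sum_ite, Finset.sum_const, Finset.sum_const]
    simp only [nsmul_eq_mul, mul_zero, add_zero]
    rw [mul_comm]
    congr 1
    norm_cast
    rw [Fintype.card_subtype]

  have key2 : ∑ x : M, ∑ a : A, ((Additive.toMul (B x ↑a) : ℂˣ) : ℂ)
      = (Fintype.card M : ℂ) := by
    rw [Finset.sum_comm]
    have step : ∀ a : A, (∑ x : M, ((Additive.toMul (B x ↑a) : ℂˣ) : ℂ))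
        = if a = (0 : A) then (Fintype.card M : ℂ) else 0 := by
      intro a
      rw [charSum (fun x : M => Additive.toMul (B x ↑a))
        (fun u v => by show Additive.toMul (B (u+v) ↑a) = _; rw [map_add]; rfl)]
      congr 1
      rw [eq_iff_iff]
      constructor
      · intro h
        have : (a : M) = 0 := by
          apply hnd
          intro y
          have := h y
          rw [hsym]
          simpa using this
        exact Subtype.ext this
      · intro h x
        rw [h]
        simp
    rw [Finset.sum_congr rfl (fun a _ => step a)]
    simp
  rw [key2] at key
  have : (Fintype.card M : ℂ) = ((Fintype.card (perp B A) * Fintype.card A : ℕ) : ℂ) := by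
    push_cast; rw [key]; ring
  have h3 := Nat.cast_injective (R := ℂ) this
  simp only [Nat.card_eq_fintype_card]
  omega


variable {M : Type*} [AddCommGroup M]

lemma card_addSubgroupOf (B C : AddSubgroup M) :
    Nat.card (B.addSubgroupOf C) = Nat.card (B ⊓ C : AddSubgroup M) := by
  rw [← AddSubgroup.inf_addSubgroupOf_right B C]
  exact Nat.card_congr (AddSubgroup.addSubgroupOfEquivOfLe inf_le_right).toEquiv

lemma card_sup_mul_card_inf [Finite M] (A B : AddSubgroup M) :
    Nat.card (A ⊔ B : AddSubgroup M) * Nat.card (A ⊓ B : AddSubgroup M)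
      = Nat.card A * Nat.card B := by
  have h1 : Nat.card (B.addSubgroupOf (A ⊔ B)) * B.relIndex (A ⊔ B)
      = Nat.card (A ⊔ B : AddSubgroup M) := AddSubgroup.card_mul_index _
  have h2 : Nat.card (B.addSubgroupOf A) * B.relIndex A = Nat.card A :=
    AddSubgroup.card_mul_index _
  have hrel : B.relIndex (A ⊔ B) = B.relIndex A := AddSubgroup.relIndex_sup_right A B
  rw [card_addSubgroupOf, inf_of_le_left (le_sup_right : B ≤ A ⊔ B)] at h1
  rw [card_addSubgroupOf] at h2
  rw [hrel] at h1
  calc Nat.card (A ⊔ B : AddSubgroup M) * Nat.card (A ⊓ B : AddSubgroup M)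
      = (Nat.card B * B.relIndex A) * Nat.card (A ⊓ B : AddSubgroup M) := by rw [h1]
    _ = Nat.card B * (Nat.card (B ⊓ A : AddSubgroup M) * B.relIndex A) := by
        rw [inf_comm]; ring
    _ = Nat.card A * Nat.card B := by rw [h2]; ring


set_option maxHeartbeats 1000000 in
lemma alt_square_aux : ∀ (n : ℕ) (V : Type u) [AddCommGroup V] [Finite V],
    Nat.card V ≤ n → ∀ (F : V →+ (V →+ Additive ℂˣ)),
    (∀ a, F a a = 0) → (∀ a, (∀ c, F a c = 0) → a = 0) → IsSquare (Nat.card V) := by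
  intro n
  induction n using Nat.strong_induction_on with
  | _ n ih =>
  intro V _ _ hn F halt hnd
  rcases subsingleton_or_nontrivial V with hs | hs
  · rw [Nat.card_eq_one_iff_unique.mpr ⟨hs, ⟨0⟩⟩]
    exact IsSquare.one
  · -- setup
    set m := AddMonoid.exponent V with hm_def
    have hm1 : 1 < m := AddMonoid.one_lt_exponent
    obtain ⟨x, hx⟩ := AddMonoid.exists_addOrderOf_eq_exponent
      (AddMonoid.ExponentExists.of_finite (G := V))
    rw [← hm_def] at hx
    have hmx : m • x = 0 := by
      rw [← hx]; exact addOrderOf_nsmul_eq_zero x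
    have hexp : ∀ v : V, m • v = 0 := fun v => AddMonoid.exponent_nsmul_eq_zero v
    have hskew : ∀ a c : V, F c a = - F a c := by
      intro a c
      have h0 := halt (a + c)
      rw [map_add] at h0
      simp only [AddMonoidHom.add_apply, map_add, halt, zero_add, add_zero] at h0
      exact eq_neg_of_add_eq_zero_left h0
    -- the character χ = F x
    let χ : Multiplicative V →* ℂˣ :=
      { toFun := fun v => Additive.toMul (F x v.toAdd)
        map_one' := by simp
        map_mul' := by
          intro a c
          show Additive.toMul (F x (a.toAdd + c.toAdd)) = _
          rw [map_add, toMul_add] }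
    have hχ : ∀ v : V, χ (Multiplicative.ofAdd v) = Additive.toMul (F x v) := fun v => rfl
    let S : Subgroup ℂˣ := χ.range
    haveI hSfin : Finite S := by
      have : Finite ↥(Set.range χ) := (Set.finite_range χ).to_subtype
      exact Finite.of_equiv _ (Equiv.setCongr (χ.coe_range).symm)
    haveI : Fintype S := Fintype.ofFinite S
    obtain ⟨g, hg⟩ := IsCyclic.exists_generator (α := S)
    have hordg : orderOf g = Nat.card S := orderOf_eq_card_of_forall_mem_zpowers hg
    -- every element of S has order dividing m
    have hSm : ∀ s : S, s ^ m = 1 := by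
      rintro ⟨s, v, hv⟩
      have hs1 : s ^ m = 1 := by
        rw [← hv]
        show (Additive.toMul (F x v.toAdd)) ^ m = 1
        rw [← toMul_nsmul, ← map_nsmul, hexp, map_zero, toMul_zero]
      exact Subtype.ext (by simpa using hs1)
    have hmk : m ∣ Nat.card S := by
      have hk : ∀ c : V, (Additive.toMul (F x c)) ^ Nat.card S = 1 := by
        intro c
        have hmem : Additive.toMul (F x c) ∈ S := ⟨Multiplicative.ofAdd c, rfl⟩
        have h2 := congrArg Subtype.val (pow_card_eq_one' (G := S) (x := ⟨_, hmem⟩))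
        simpa only [SubmonoidClass.coe_pow, OneMemClass.coe_one] using h2
      have hzero : (Nat.card S) • x = 0 := by
        apply hnd
        intro c
        have : F ((Nat.card S) • x) c = (Nat.card S) • (F x c) := by
          rw [map_nsmul]; rfl
        rw [this]
        have := hk c
        rw [← toMul_nsmul] at this
        exact toMul_eq_one.mp this
      rw [← hx]
      exact addOrderOf_dvd_of_nsmul_eq_zero hzero
    have hcardS : Nat.card S = m := by
      have h1 : orderOf g ∣ m := orderOf_dvd_of_pow_eq_one (hSm g)
      have h2 : m ∣ orderOf g := by rw [hordg]; exact hmk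
      rw [← hordg]
      exact Nat.dvd_antisymm h1 h2
    -- ζ generator
    set ζ : ℂˣ := (g : ℂˣ) with hζdef
    have hordζ : orderOf ζ = m := by
      rw [Subgroup.orderOf_coe, hordg, hcardS]
    obtain ⟨y', hy'⟩ := g.2
    set y : V := y'.toAdd with hydef
    have hxy : Additive.toMul (F x y) = ζ := hy'
    have hyx : Additive.toMul (F y x) = ζ⁻¹ := by
      rw [hskew x y, toMul_neg, hxy]
    have hmy : m • y = 0 := hexp y
    -- the subgroup Z of powers of ζ contains all m-th roots of unity
    set Z : Subgroup ℂˣ := Subgroup.zpowers ζ with hZdef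
    haveI : NeZero m := ⟨by omega⟩
    have hZcard : Nat.card Z = m := by rw [Nat.card_zpowers, hordζ]
    have hmemZ : ∀ u : ℂˣ, u ^ m = 1 → u ∈ Z := by
      intro u hu
      have hle : Z ≤ rootsOfUnity m ℂ := by
        rw [hZdef, Subgroup.zpowers_le]
        rw [mem_rootsOfUnity]
        rw [← hordζ]
        exact pow_orderOf_eq_one ζ
      have hZeq : Z = rootsOfUnity m ℂ := by
        apply Subgroup.eq_of_le_of_card_ge hle
        rw [hZcard, Complex.card_rootsOfUnity]
      rw [hZeq, mem_rootsOfUnity]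
      exact hu
    have hvalx : ∀ v : V, Additive.toMul (F v x) ∈ Z := by
      intro v
      apply hmemZ
      rw [← toMul_nsmul, ← map_nsmul, hmx, map_zero, toMul_zero]
    have hvaly : ∀ v : V, Additive.toMul (F v y) ∈ Z := by
      intro v
      apply hmemZ
      rw [← toMul_nsmul, ← map_nsmul, hmy, map_zero, toMul_zero]
    -- the homomorphism D
    let D : V →+ Additive (↥Z × ↥Z) := AddMonoidHom.mk'
      (fun v => Additive.ofMul (⟨Additive.toMul (F v x), hvalx v⟩,
        (⟨Additive.toMul (F v y), hvaly v⟩ : ↥Z)))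
      (by
        intro a c
        apply Additive.toMul.injective
        rw [toMul_add]
        ext <;> simp [map_add, toMul_add])
    have hDapp : ∀ v : V, (Additive.toMul (D v)).1.1 = Additive.toMul (F v x) ∧
        (Additive.toMul (D v)).2.1 = Additive.toMul (F v y) := fun v => ⟨rfl, rfl⟩
    -- F of zsmul combos
    have hFz : ∀ (v c : V) (k : ℤ), Additive.toMul (F (k • v) c)
        = (Additive.toMul (F v c)) ^ k := by
      intro v c k
      rw [map_zsmul]
      show Additive.toMul (k • (F v) c) = _
      rw [toMul_zsmul]
    have hsurj : Function.Surjective D := by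
      intro w
      obtain ⟨a, ha⟩ := Subgroup.mem_zpowers_iff.mp (Additive.toMul w).1.2
      obtain ⟨c, hc⟩ := Subgroup.mem_zpowers_iff.mp (Additive.toMul w).2.2
      refine ⟨c • x - a • y, ?_⟩
      apply Additive.toMul.injective
      ext
      · exact congrArg Units.val (show Additive.toMul (F (c • x - a • y) x)
          = (((Additive.toMul w).1 : ↥Z) : ℂˣ) from by
            rw [← ha, sub_eq_add_neg, map_add, AddMonoidHom.add_apply, toMul_add, ← neg_zsmul, hFz, hFz, halt,
              toMul_zero, one_zpow, one_mul, hyx]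
            group)
      · exact congrArg Units.val (show Additive.toMul (F (c • x - a • y) y)
          = (((Additive.toMul w).2 : ↥Z) : ℂˣ) from by
            rw [← hc, sub_eq_add_neg, map_add, AddMonoidHom.add_apply, toMul_add, ← neg_zsmul, hFz, hFz, halt,
              toMul_zero, hxy]
            group)
    -- kernel
    set W : AddSubgroup V := D.ker with hWdef
    have hcardZZ : Nat.card (Additive (↥Z × ↥Z)) = m * m := by
      rw [Nat.card_congr (Additive.toMul (α := ↥Z × ↥Z)), Nat.card_prod, hZcard]
    have hcardV : Nat.card V = Nat.card W * (m * m) := by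
      have h1 : Nat.card V = Nat.card (V ⧸ W) * Nat.card W :=
        AddSubgroup.card_eq_card_quotient_mul_card_addSubgroup W
      have h2 : Nat.card (V ⧸ W) = m * m := by
        rw [Nat.card_congr (QuotientAddGroup.quotientKerEquivOfSurjective D hsurj).toEquiv]
        exact hcardZZ
      rw [h1, h2]; ring
    -- membership in W
    have hmemW : ∀ v : V, v ∈ W ↔ (F v x = 0 ∧ F v y = 0) := by
      intro v
      constructor
      · intro hv
        have h0 : D v = 0 := hv
        have h1 : Additive.toMul (D v) = 1 := by rw [h0]; rfl
        constructor
        · rw [← toMul_eq_one]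
          calc Additive.toMul (F v x) = (((Additive.toMul (D v)).1 : ↥Z) : ℂˣ) := rfl
            _ = 1 := by rw [h1]; rfl
        · rw [← toMul_eq_one]
          calc Additive.toMul (F v y) = (((Additive.toMul (D v)).2 : ↥Z) : ℂˣ) := rfl
            _ = 1 := by rw [h1]; rfl
      · rintro ⟨hvx, hvy⟩
        show D v = 0
        apply Additive.toMul.injective
        ext
        · exact congrArg Units.val (show Additive.toMul (F v x) = (1 : ℂˣ) from
            toMul_eq_one.mpr hvx)
        · exact congrArg Units.val (show Additive.toMul (F v y) = (1 : ℂˣ) from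
            toMul_eq_one.mpr hvy)
    -- restricted pairing on W
    let FW : ↥W →+ (↥W →+ Additive ℂˣ) :=
      { toFun := fun w => (F ↑w).comp W.subtype
        map_zero' := by ext c; simp
        map_add' := by intro u v; ext c; simp }
    have haltW : ∀ w : ↥W, FW w w = 0 := fun w => halt ↑w
    have hndW : ∀ w : ↥W, (∀ c : ↥W, FW w c = 0) → w = 0 := by
      intro w hw
      have hwx : F (↑w : V) x = 0 := ((hmemW ↑w).mp w.2).1
      have hwy : F (↑w : V) y = 0 := ((hmemW ↑w).mp w.2).2
      have : (↑w : V) = 0 := by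
        apply hnd
        intro c
        -- decompose c
        obtain ⟨a, ha⟩ := Subgroup.mem_zpowers_iff.mp (hvalx c)
        obtain ⟨b, hb⟩ := Subgroup.mem_zpowers_iff.mp (hvaly c)
        -- u := c - b • x + a • y ∈ W
        have hux : F (c - b • x + a • y) x = 0 := by
          rw [← toMul_eq_one, map_add, AddMonoidHom.add_apply, toMul_add, sub_eq_add_neg,
            map_add, AddMonoidHom.add_apply, toMul_add, ← neg_zsmul, hFz, hFz, halt, hyx,
            toMul_zero, one_zpow, mul_one, ← ha]
          group
        have huy : F (c - b • x + a • y) y = 0 := by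
          rw [← toMul_eq_one, map_add, AddMonoidHom.add_apply, toMul_add, sub_eq_add_neg,
            map_add, AddMonoidHom.add_apply, toMul_add, ← neg_zsmul, hFz, hFz, halt, hxy,
            toMul_zero, ← hb]
          group
        have huW : (c - b • x + a • y) ∈ W := (hmemW _).mpr ⟨hux, huy⟩
        have h5 : F (↑w : V) (c - b • x + a • y) = 0 := hw ⟨_, huW⟩
        -- now expand
        have h6 : Additive.toMul (F (↑w : V) c) = 1 := by
          have hexpand : F (↑w : V) (c - b • x + a • y)
              = F (↑w : V) c + (-b) • F (↑w : V) x + a • F (↑w : V) y := by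
            rw [map_add, map_sub, map_zsmul, map_zsmul, neg_zsmul]
            abel
          rw [hexpand, hwx, hwy, smul_zero, smul_zero, add_zero, add_zero] at h5
          rw [← toMul_eq_one] at h5
          exact h5
        exact toMul_eq_one.mp h6
      exact Subtype.ext this
    -- induction
    have hWpos : 0 < Nat.card W := Nat.card_pos
    have hlt : Nat.card W < n := by
      have : Nat.card W < Nat.card V := by
        have hmm : 1 < m * m := lt_of_lt_of_le hm1 (Nat.le_mul_of_pos_right m (by omega))
        calc Nat.card W = Nat.card W * 1 := by ring
          _ < Nat.card W * (m * m) := by exact mul_lt_mul_of_pos_left hmm hWpos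
          _ = Nat.card V := hcardV.symm
      omega
    obtain ⟨t, ht⟩ := ih (Nat.card W) hlt ↥W le_rfl FW haltW hndW
    exact ⟨t * m, by rw [hcardV, ht]; ring⟩

variable {V : Type u} [AddCommGroup V]

def radical (F : V →+ (V →+ Additive ℂˣ)) : AddSubgroup V where
  carrier := {v | ∀ w, F v w = 0}
  zero_mem' := by intro w; rw [map_zero]; rfl
  add_mem' := by
    intro a b ha hb w
    rw [map_add, AddMonoidHom.add_apply, ha w, hb w, add_zero]
  neg_mem' := by
    intro a ha w
    rw [map_neg, AddMonoidHom.neg_apply, ha w, neg_zero]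

lemma mem_radical {F : V →+ (V →+ Additive ℂˣ)} {v : V} :
    v ∈ radical F ↔ ∀ w, F v w = 0 := Iff.rfl


lemma rad_square [Finite V] (F : V →+ (V →+ Additive ℂˣ)) (halt : ∀ a, F a a = 0) :
    ∃ t : ℕ, Nat.card V = Nat.card (radical F) * (t * t) := by
  have hskew : ∀ a c : V, F c a = - F a c := by
    intro a c
    have h0 := halt (a + c)
    rw [map_add] at h0
    simp only [AddMonoidHom.add_apply, map_add, halt, zero_add, add_zero] at h0
    exact eq_neg_of_add_eq_zero_left h0
  set R : AddSubgroup V := radical F with hRdef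
  let Λ1 : V ⧸ R →+ (V →+ Additive ℂˣ) :=
    QuotientAddGroup.lift R F (fun v hv => by
      ext w : 1
      exact hv w)
  have hΛ1 : ∀ v : V, Λ1 (QuotientAddGroup.mk v) = F v := fun v => rfl
  have pf : ∀ p : V ⧸ R, ∀ z ∈ R, Λ1 p z = 0 := by
    intro p
    induction p using QuotientAddGroup.induction_on with
    | H v =>
      intro z hz
      rw [hΛ1]
      rw [hskew z v]
      rw [hz v, neg_zero]
  let FQ : V ⧸ R →+ ((V ⧸ R) →+ Additive ℂˣ) :=
    { toFun := fun p => QuotientAddGroup.lift R (Λ1 p) (pf p)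
      map_zero' := by
        ext z : 2
        show Λ1 0 z = 0
        rw [map_zero]; rfl
      map_add' := by
        intro p r
        ext z : 2
        show Λ1 (p + r) z = Λ1 p z + Λ1 r z
        rw [map_add]; rfl }
  have hFQ : ∀ v w : V, FQ (QuotientAddGroup.mk v) (QuotientAddGroup.mk w) = F v w :=
    fun v w => rfl
  have haltQ : ∀ p : V ⧸ R, FQ p p = 0 := by
    intro p
    induction p using QuotientAddGroup.induction_on with
    | H v => rw [hFQ]; exact halt v
  have hndQ : ∀ p : V ⧸ R, (∀ r, FQ p r = 0) → p = 0 := by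
    intro p hp
    induction p using QuotientAddGroup.induction_on with
    | H v =>
      rw [QuotientAddGroup.eq_zero_iff]
      intro w
      have := hp (QuotientAddGroup.mk w)
      rwa [hFQ] at this
  have hsq := alt_square_aux (Nat.card (V ⧸ R)) (V ⧸ R) le_rfl FQ haltQ hndQ
  obtain ⟨t, ht⟩ := hsq
  refine ⟨t, ?_⟩
  rw [AddSubgroup.card_eq_card_quotient_mul_card_addSubgroup R, ht]
  ring

end MaslovAux

open MaslovAux

set_option maxHeartbeats 2000000

/-- For Lagrangian subgroups `L1, L2, L3` of a metric group,
`|L1| · |L1 ∩ L2| · |L2 ∩ L3| · |L1 ∩ L3|` is a perfect square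
(equivalently, `d(L1,L2)·d(L2,L3) = d(L1,L3)` in `ℚ₊ˣ/(ℚ₊ˣ)²`). -/
theorem stmt0 {M : Type*} [AddCommGroup M] [Fintype M] (q : M → ℂˣ)
    (hq : IsMetric q) (L1 L2 L3 : AddSubgroup M)
    (h1 : IsLagrangian q L1) (h2 : IsLagrangian q L2) (h3 : IsLagrangian q L3) :
    IsSquare (Nat.card L1 * Nat.card (L1 ⊓ L2 : AddSubgroup M) *
      Nat.card (L2 ⊓ L3 : AddSubgroup M) * Nat.card (L1 ⊓ L3 : AddSubgroup M)) := by
  classical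
  obtain ⟨hqeven, hb1, hb2, hbnd⟩ := hq
  -- the bundled pairing
  set B : M →+ (M →+ Additive ℂˣ) := AddMonoidHom.mk'
    (fun x => AddMonoidHom.mk' (fun y => Additive.ofMul (bq q x y))
      (fun y z => by
        show Additive.ofMul (bq q x (y + z))
          = Additive.ofMul (bq q x y) + Additive.ofMul (bq q x z)
        rw [hb2 x y z, ofMul_mul]))
    (fun x y => by
      ext z : 1
      show Additive.ofMul (bq q (x + y) z)
        = Additive.ofMul (bq q x z) + Additive.ofMul (bq q y z)
      rw [hb1 x y z, ofMul_mul]) with hBdef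
  have hBapp : ∀ x y : M, B x y = Additive.ofMul (bq q x y) := fun _ _ => rfl
  have hBsym : ∀ x y : M, B x y = B y x := by
    intro x y
    rw [hBapp, hBapp]
    congr 1
    show q (x + y) * (q x)⁻¹ * (q y)⁻¹ = q (y + x) * (q y)⁻¹ * (q x)⁻¹
    rw [add_comm x y, mul_right_comm]
  have hBnd : ∀ x : M, (∀ y, B x y = 0) → x = 0 := by
    intro x hx
    apply hbnd
    intro y
    have := hx y
    rw [hBapp] at this
    exact ofMul_eq_zero.mp this
  have hiso : ∀ (L : AddSubgroup M), (∀ x ∈ L, q x = 1) →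
      ∀ x ∈ L, ∀ y ∈ L, B x y = 0 := by
    intro L hL x hx y hy
    rw [hBapp, ofMul_eq_zero]
    show q (x + y) * (q x)⁻¹ * (q y)⁻¹ = 1
    rw [hL _ (add_mem hx hy), hL _ hx, hL _ hy]
    simp
  have hisoL1 := hiso L1 h1.1
  have hisoL2 := hiso L2 h2.1
  have hisoL3 := hiso L3 h3.1
  -- perp facts
  have hcardperp : ∀ A : AddSubgroup M,
      Nat.card (perp B A) * Nat.card A = Nat.card M :=
    fun A => card_perp B hBsym hBnd A
  have hposM : ∀ A : AddSubgroup M, 0 < Nat.card A := fun A => Nat.card_pos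
  have hperp_card : ∀ A : AddSubgroup M, Nat.card (perp B A) * Nat.card A = Nat.card M :=
    hcardperp
  have hperp_perp : ∀ A : AddSubgroup M, perp B (perp B A) = A := by
    intro A
    have hle : A ≤ perp B (perp B A) := by
      intro a ha
      intro y hy
      rw [hBsym]
      exact hy a ha
    have hcard : Nat.card (perp B (perp B A)) = Nat.card A := by
      have e1 := hcardperp (perp B A)
      have e2 := hcardperp A
      have hpos := hposM (perp B A)
      nlinarith [e1, e2]
    exact (AddSubgroup.eq_of_le_of_card_ge hle (le_of_eq hcard)).symm
  have hLperp : ∀ L : AddSubgroup M, IsLagrangian q L → perp B L = L := by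
    intro L hL
    have hle : L ≤ perp B L := by
      intro x hx a ha
      exact hiso L hL.1 x hx a ha
    have hcard : Nat.card (perp B L) = Nat.card L := by
      have e1 := hcardperp L
      have e2 := hL.2
      have hpos := hposM L
      nlinarith [e1, e2]
    exact (AddSubgroup.eq_of_le_of_card_ge hle (le_of_eq hcard)).symm
  have hperp_sup : ∀ A C : AddSubgroup M,
      perp B (A ⊔ C) = perp B A ⊓ perp B C := by
    intro A C
    apply le_antisymm
    · intro x hx
      constructor
      · intro a ha; exact hx a (AddSubgroup.mem_sup_left ha)
      · intro a ha; exact hx a (AddSubgroup.mem_sup_right ha)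
    · intro x hx a ha
      obtain ⟨y, hy, z, hz, rfl⟩ := AddSubgroup.mem_sup.mp ha
      rw [map_add, hx.1 y hy, hx.2 z hz, add_zero]
  -- cardinalities
  set n := Nat.card L1 with hndef
  have hnM : n ^ 2 = Nat.card M := h1.2
  have hn2 : Nat.card L2 = n := by
    apply Nat.pow_left_injective two_ne_zero
    show Nat.card ↥L2 ^ 2 = n ^ 2
    rw [h2.2, hnM]
  have hn3 : Nat.card L3 = n := by
    apply Nat.pow_left_injective two_ne_zero
    show Nat.card ↥L3 ^ 2 = n ^ 2
    rw [h3.2, hnM]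
  set a12 := Nat.card (L1 ⊓ L2 : AddSubgroup M) with ha12def
  set a23 := Nat.card (L2 ⊓ L3 : AddSubgroup M) with ha23def
  set a13 := Nat.card (L1 ⊓ L3 : AddSubgroup M) with ha13def
  set c := Nat.card (L1 ⊓ (L2 ⊓ L3) : AddSubgroup M) with hcdef
  -- the subgroup J and K
  set J : AddSubgroup M := L1 ⊔ (L2 ⊓ L3) with hJdef
  set K : AddSubgroup M := perp B J with hKdef
  have hperpL23 : perp B (L2 ⊓ L3) = L2 ⊔ L3 := by
    have hle : L2 ⊔ L3 ≤ perp B (L2 ⊓ L3) := by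
      apply sup_le
      · intro x hx a ha
        exact hisoL2 x hx a ha.1
      · intro x hx a ha
        exact hisoL3 x hx a ha.2
    have hcard : Nat.card (perp B (L2 ⊓ L3)) = Nat.card (L2 ⊔ L3 : AddSubgroup M) := by
      have e1 := hcardperp (L2 ⊓ L3)
      have e2 := card_sup_mul_card_inf L2 L3
      rw [hn2, hn3] at e2
      have hpos := hposM (L2 ⊓ L3)
      nlinarith [e1, e2, hnM]
    exact (AddSubgroup.eq_of_le_of_card_ge hle (le_of_eq hcard)).symm
  have hKeq : K = L1 ⊓ (L2 ⊔ L3) := by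
    rw [hKdef, hJdef, hperp_sup, hLperp L1 h1, hperpL23]
  have hKperp : perp B K = J := by
    rw [hKdef, hperp_perp]
  -- cardinalities of J, K, R0
  have hcardJ : Nat.card J * c = n * a23 := by
    have := card_sup_mul_card_inf L1 (L2 ⊓ L3)
    rw [← hJdef, ← hcdef, ← ha23def, ← hndef] at this
    exact this
  have hcardK : Nat.card K * Nat.card J = n * n := by
    have := hcardperp J
    rw [← hKdef] at this
    rw [this, ← hnM]
    ring
  set R0 : AddSubgroup M := (L1 ⊓ L2) ⊔ (L1 ⊓ L3) with hR0def
  have hR0K : R0 ≤ K := by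
    rw [hKeq]
    apply sup_le
    · exact le_inf inf_le_left (inf_le_right.trans le_sup_left)
    · exact le_inf inf_le_left (inf_le_right.trans le_sup_right)
  have hcardR0 : Nat.card R0 * c = a12 * a13 := by
    have := card_sup_mul_card_inf (L1 ⊓ L2) (L1 ⊓ L3)
    rw [← hR0def, ← ha12def, ← ha13def] at this
    rw [← this]
    congr 2
    rw [hcdef]
    congr 1
    rw [inf_inf_distrib_left]
  -- decomposition of elements of K
  have hKle : K ≤ L1 ⊓ (L2 ⊔ L3) := le_of_eq hKeq
  have hxL1 : ∀ x : ↥K, (x : M) ∈ L1 := by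
    intro x
    exact (AddSubgroup.mem_inf.mp (hKle x.2)).1
  have hdecomp : ∀ x : ↥K, ∃ y z : M, y ∈ L2 ∧ z ∈ L3 ∧ y + z = (x : M) := by
    intro x
    obtain ⟨y, hy, z, hz, hyz⟩ :=
      AddSubgroup.mem_sup.mp (AddSubgroup.mem_inf.mp (hKle x.2)).2
    exact ⟨y, z, hy, hz, hyz⟩
  choose Y Zf hY hZ hYZ using hdecomp
  -- well-definedness
  have hwd : ∀ u ∈ L2 ⊓ L3, ∀ x' : ↥K, B u (x' : M) = 0 := by
    intro u hu x'
    obtain ⟨hu2, hu3⟩ := AddSubgroup.mem_inf.mp hu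
    rw [← hYZ x', map_add, hisoL2 u hu2 _ (hY x'), hisoL3 u hu3 _ (hZ x'), add_zero]
  have hrep : ∀ (x : ↥K) (u : M), u ∈ L2 → (x : M) - u ∈ L3 →
      ∀ x' : ↥K, B u (x' : M) = B (Y x) (x' : M) := by
    intro x u hu hxu x'
    have hdiff : u - Y x ∈ L2 ⊓ L3 := by
      refine AddSubgroup.mem_inf.mpr ⟨sub_mem hu (hY x), ?_⟩
      have heq : u - Y x = Zf x - ((x : M) - u) := by
        rw [← hYZ x]
        abel
      rw [heq]
      exact sub_mem (hZ x) hxu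
    have h0 := hwd _ hdiff x'
    rw [map_sub, AddMonoidHom.sub_apply] at h0
    exact sub_eq_zero.mp h0
  -- the Maslov pairing on K
  set FK : ↥K →+ (↥K →+ Additive ℂˣ) := AddMonoidHom.mk'
    (fun x => (B (Y x)).comp K.subtype)
    (by
      intro x1 x2
      ext z : 1
      show B (Y (x1 + x2)) (z : M) = B (Y x1) (z : M) + B (Y x2) (z : M)
      have hmem2 : Y x1 + Y x2 ∈ L2 := add_mem (hY x1) (hY x2)
      have hmem3 : ((x1 + x2 : ↥K) : M) - (Y x1 + Y x2) ∈ L3 := by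
        have heq : ((x1 + x2 : ↥K) : M) - (Y x1 + Y x2) = Zf x1 + Zf x2 := by
          push_cast
          rw [← hYZ x1, ← hYZ x2]
          abel
        rw [heq]
        exact add_mem (hZ x1) (hZ x2)
      rw [← hrep (x1 + x2) (Y x1 + Y x2) hmem2 hmem3 z, map_add, AddMonoidHom.add_apply])
    with hFKdef
  have hFKapp : ∀ x z : ↥K, FK x z = B (Y x) (z : M) := fun x z => rfl
  -- alternating
  have haltK : ∀ x : ↥K, FK x x = 0 := by
    intro x
    rw [hFKapp, ← hYZ x, map_add, hisoL2 _ (hY x) _ (hY x)]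
    rw [zero_add, hBapp, ofMul_eq_zero]
    show q (Y x + Zf x) * (q (Y x))⁻¹ * (q (Zf x))⁻¹ = 1
    rw [hYZ x, h1.1 _ (hxL1 x), h2.1 _ (hY x), h3.1 _ (hZ x)]
    simp
  -- radical computation
  have hradK : radical FK = R0.addSubgroupOf K := by
    apply le_antisymm
    · intro x hx
      rw [AddSubgroup.mem_addSubgroupOf]
      have hYperp : Y x ∈ perp B K := by
        intro a ha
        exact hx ⟨a, ha⟩
      rw [hKperp, hJdef] at hYperp
      obtain ⟨u, hu, w, hw, huw⟩ := AddSubgroup.mem_sup.mp hYperp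
      obtain ⟨hw2, hw3⟩ := AddSubgroup.mem_inf.mp hw
      have hu2 : u ∈ L2 := by
        have : u = Y x - w := by rw [← huw]; abel
        rw [this]
        exact sub_mem (hY x) hw2
      have hv1 : (x : M) - u ∈ L1 := sub_mem (hxL1 x) hu
      have hv3 : (x : M) - u ∈ L3 := by
        have heq : (x : M) - u = Zf x + w := by
          rw [← hYZ x, ← huw]
          abel
        rw [heq]
        exact add_mem (hZ x) hw3
      have : (x : M) = u + ((x : M) - u) := by abel
      rw [this]
      exact AddSubgroup.mem_sup.mpr ⟨u, AddSubgroup.mem_inf.mpr ⟨hu, hu2⟩,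
        (x : M) - u, AddSubgroup.mem_inf.mpr ⟨hv1, hv3⟩, rfl⟩
    · intro x hx
      rw [AddSubgroup.mem_addSubgroupOf] at hx
      intro x'
      obtain ⟨u, hu, v, hv, huv⟩ := AddSubgroup.mem_sup.mp hx
      obtain ⟨hu1, hu2⟩ := AddSubgroup.mem_inf.mp hu
      obtain ⟨hv1, hv3⟩ := AddSubgroup.mem_inf.mp hv
      have hxv3 : (x : M) - u ∈ L3 := by
        have : (x : M) - u = v := by rw [← huv]; abel
        rw [this]
        exact hv3
      rw [hFKapp, ← hrep x u hu2 hxv3 x']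
      exact hisoL1 u hu1 _ (hxL1 x')
  -- apply the square theorem
  obtain ⟨t, ht⟩ := rad_square FK haltK
  rw [hradK] at ht
  have hcardrad : Nat.card (R0.addSubgroupOf K) = Nat.card R0 := by
    rw [card_addSubgroupOf, inf_of_le_left hR0K]
  rw [hcardrad] at ht
  -- final arithmetic
  set r0 := Nat.card R0 with hr0def
  set cK := Nat.card K with hcKdef
  set cJ := Nat.card J with hcJdef
  have e5 : cK * (n * a23) = n * n * c := by
    calc cK * (n * a23) = cK * (cJ * c) := by rw [hcardJ]
      _ = (cK * cJ) * c := by ring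
      _ = n * n * c := by rw [hcardK]
  have key : (n * a12 * a23 * a13) * (t * t) = (n * c) * (n * c) := by
    calc (n * a12 * a23 * a13) * (t * t)
        = (a12 * a13) * (n * a23) * (t * t) := by ring
      _ = (r0 * c) * (n * a23) * (t * t) := by rw [hcardR0]
      _ = (r0 * (t * t)) * (n * a23) * c := by ring
      _ = cK * (n * a23) * c := by rw [← ht]
      _ = (n * n * c) * c := by rw [e5]
      _ = (n * c) * (n * c) := by ring
  have htpos : 0 < t := by
    have hKpos : 0 < cK := hposM K
    rcases Nat.eq_zero_or_pos t with h0 | h0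
    · rw [h0, mul_zero, mul_zero] at ht
      omega
    · exact h0
  have hdvd : t ∣ n * c := by
    have h2 : t ^ 2 ∣ (n * c) ^ 2 := ⟨n * a12 * a23 * a13, by
      rw [pow_two, pow_two, ← key]; ring⟩
    exact (Nat.pow_dvd_pow_iff (two_ne_zero)).mp h2
  obtain ⟨s, hs⟩ := hdvd
  refine ⟨s, ?_⟩
  have : (n * a12 * a23 * a13) * (t * t) = (s * s) * (t * t) := by
    rw [key, hs]; ring
  have htt : 0 < t * t := Nat.mul_pos htpos htpos
  exact Nat.eq_of_mul_eq_mul_right htt this
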